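/- Let $T: C \to C$ be nonexpansive on a closed convex subset $C$ of a Banach space, and let $(x_n)$ be generated by the inexact Krasnosel'skii-Mann iteration $x_{n+1} = (1-\alpha_{n+1})x_n + \alpha_{n+1}(Tx_n + e_{n+1})$ with all $x_n \in C$ and $\|Tx_n - x_0\| \leq \kappa$ for all $n$. Let $\epsilon_n \geq \|e_n\|$ with $\epsilon_0 = 0$, $\alpha_0 = 1$, and define $w_{m,n}$ for $-1 \leq m \leq n$ by $w_{-1,n} = \kappa$ and $w_{m,n} = \sum_{i=0}^m \sum_{j=m+1}^n \pi_i^m \pi_j^n (w_{i-1,j-1} + \epsilon_i + \epsilon_j)$ for $0 \leq m \leq n$, where $\pi_i^n = \alpha_i \prod_{k=i+1}^n(1-\alpha_k)$. Then $\|x_m - x_n\| \leq w_{m,n}$ for all $0 \leq m \leq n$. -/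

import Mathlib

open Finset

private def piw (α : ℕ → ℝ) (i n : ℕ) : ℝ := α i * ∏ k ∈ Finset.Icc (i+1) n, (1 - α k)

private lemma piw_succ_of_le (α : ℕ → ℝ) {i n : ℕ} (h : i ≤ n) :
    piw α i (n+1) = (1 - α (n+1)) * piw α i n := by
  unfold piw
  rw [Finset.prod_Icc_succ_top (by omega)]
  ring

private lemma piw_self (α : ℕ → ℝ) (n : ℕ) : piw α n n = α n := by
  unfold piw
  rw [Finset.Icc_eq_empty (by omega), Finset.prod_empty, mul_one]

private lemma piw_nonneg (α : ℕ → ℝ) (hα : ∀ n, α n ∈ Set.Icc (0:ℝ) 1) (i n : ℕ) :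
    0 ≤ piw α i n :=
  mul_nonneg (hα i).1 (Finset.prod_nonneg fun k _ => by linarith [(hα k).2])

private lemma piw_shift (α : ℕ → ℝ) {i m n : ℕ} (him : i ≤ m) (hmn : m ≤ n) :
    piw α i n = piw α i m * ∏ k ∈ Finset.Icc (m+1) n, (1 - α k) := by
  unfold piw
  rw [Finset.Icc_add_one_left_eq_Ioc, Finset.Icc_add_one_left_eq_Ioc, Finset.Icc_add_one_left_eq_Ioc,
    ← Finset.prod_Ioc_consecutive _ him hmn]
  ring

private lemma sum_piw (α : ℕ → ℝ) (hα0 : α 0 = 1) :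
    ∀ n, ∑ i ∈ Finset.range (n+1), piw α i n = 1 := by
  intro n
  induction n with
  | zero => simp [piw, hα0]
  | succ n ih =>
    rw [Finset.sum_range_succ,
      Finset.sum_congr rfl (fun i hi => piw_succ_of_le α (Nat.lt_succ_iff.mp (Finset.mem_range.mp hi))),
      ← Finset.mul_sum, ih, piw_self]
    ring

private noncomputable def yf {X : Type*} [AddCommGroup X] (T : X → X) (e x : ℕ → X) : ℕ → X
  | 0 => x 0
  | (i+1) => T (x i) + e (i+1)

private lemma x_repr {X : Type*} [AddCommGroup X] [Module ℝ X]
    (T : X → X) (α : ℕ → ℝ) (hα0 : α 0 = 1) (e x : ℕ → X)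
    (hrec : ∀ n, x (n + 1) = (1 - α (n + 1)) • x n + α (n + 1) • (T (x n) + e (n + 1))) :
    ∀ n, x n = ∑ i ∈ Finset.range (n+1), piw α i n • yf T e x i := by
  intro n
  induction n with
  | zero => simp [piw, hα0, yf]
  | succ n ih =>
    rw [Finset.sum_range_succ,
      Finset.sum_congr rfl (fun i hi => by
        rw [piw_succ_of_le α (Nat.lt_succ_iff.mp (Finset.mem_range.mp hi)), mul_smul]),
      ← Finset.smul_sum, ← ih, piw_self, hrec n]
    rfl
theorem stmt4 {X : Type*} [NormedAddCommGroup X] [NormedSpace ℝ X] [CompleteSpace X]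
    (C : Set X) (hC : IsClosed C) (hconv : Convex ℝ C)
    (T : X → X) (hTmaps : ∀ x ∈ C, T x ∈ C)
    (hT : ∀ x ∈ C, ∀ y ∈ C, ‖T x - T y‖ ≤ ‖x - y‖)
    (α : ℕ → ℝ) (hα0 : α 0 = 1) (hα : ∀ n, α n ∈ Set.Icc (0:ℝ) 1)
    (e : ℕ → X) (he0 : e 0 = 0)
    (x : ℕ → X) (hxC : ∀ n, x n ∈ C)
    (hrec : ∀ n, x (n + 1)
      = (1 - α (n + 1)) • x n + α (n + 1) • (T (x n) + e (n + 1)))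
    (κ : ℝ) (hκ : 0 ≤ κ) (hbound : ∀ n, ‖T (x n) - x 0‖ ≤ κ)
    (ε : ℕ → ℝ) (hε : ∀ n, ‖e n‖ ≤ ε n) (hε0 : ε 0 = 0)
    (w : ℤ → ℤ → ℝ)
    (hwκ : ∀ n : ℤ, w (-1) n = κ)
    (hwrec : ∀ m n : ℕ, m ≤ n → w m n
      = ∑ i ∈ Finset.range (m + 1), ∑ j ∈ Finset.Icc (m + 1) n,
          (α i * ∏ k ∈ Finset.Icc (i + 1) m, (1 - α k))
            * (α j * ∏ k ∈ Finset.Icc (j + 1) n, (1 - α k))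
            * (w ((i : ℤ) - 1) ((j : ℤ) - 1) + ε i + ε j)) :
    ∀ m n : ℕ, m ≤ n → ‖x m - x n‖ ≤ w m n := by
  have hxr := x_repr T α hα0 e x hrec
  intro m n
  induction n using Nat.strong_induction_on generalizing m with
  | _ n IH =>
  intro hmn
  -- splitting sums
  have hsplitX : ∀ (f : ℕ → X),
      ∑ i ∈ Finset.range (n+1), f i
        = ∑ i ∈ Finset.range (m+1), f i + ∑ i ∈ Finset.Icc (m+1) n, f i := by
    intro f
    rw [Finset.range_eq_Ico, Finset.range_eq_Ico, ← Finset.Ico_add_one_right_eq_Icc]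
    exact (Finset.sum_Ico_consecutive f (m := 0) (n := m+1) (k := n+1) (by omega) (by omega)).symm
  have hsplitR : ∀ (f : ℕ → ℝ),
      ∑ i ∈ Finset.range (n+1), f i
        = ∑ i ∈ Finset.range (m+1), f i + ∑ i ∈ Finset.Icc (m+1) n, f i := by
    intro f
    rw [Finset.range_eq_Ico, Finset.range_eq_Ico, ← Finset.Ico_add_one_right_eq_Icc]
    exact (Finset.sum_Ico_consecutive f (m := 0) (n := m+1) (k := n+1) (by omega) (by omega)).symm
  have hPS : (∏ k ∈ Finset.Icc (m+1) n, (1 - α k))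
      + (∑ j ∈ Finset.Icc (m+1) n, piw α j n) = 1 := by
    have h1 := sum_piw α hα0 n
    rw [hsplitR, Finset.sum_congr rfl
      (fun j hj => piw_shift α (Nat.lt_succ_iff.mp (Finset.mem_range.mp hj)) hmn),
      ← Finset.sum_mul, sum_piw α hα0 m, one_mul] at h1
    linarith
  have hxn : x n = (∏ k ∈ Finset.Icc (m+1) n, (1 - α k)) • x m
      + ∑ j ∈ Finset.Icc (m+1) n, piw α j n • yf T e x j := by
    rw [hxr n, hsplitX, Finset.sum_congr rfl
      (fun j hj => by
        rw [piw_shift α (Nat.lt_succ_iff.mp (Finset.mem_range.mp hj)) hmn,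
          mul_comm, mul_smul]),
      ← Finset.smul_sum, ← hxr m]
  have key : ∑ i ∈ Finset.range (m+1), ∑ j ∈ Finset.Icc (m+1) n,
      (piw α i m * piw α j n) • (yf T e x i - yf T e x j) = x m - x n := by
    have e1 : ∑ i ∈ Finset.range (m+1), ∑ j ∈ Finset.Icc (m+1) n,
        (piw α i m * piw α j n) • yf T e x i
        = (∑ j ∈ Finset.Icc (m+1) n, piw α j n) • x m := by
      rw [Finset.sum_congr rfl (fun i _ => by
        rw [← Finset.sum_smul, ← Finset.mul_sum, mul_comm, mul_smul]),
        ← Finset.smul_sum, ← hxr m]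
    have e2 : ∑ i ∈ Finset.range (m+1), ∑ j ∈ Finset.Icc (m+1) n,
        (piw α i m * piw α j n) • yf T e x j
        = ∑ j ∈ Finset.Icc (m+1) n, piw α j n • yf T e x j := by
      rw [Finset.sum_comm]
      exact Finset.sum_congr rfl (fun j _ => by
        rw [← Finset.sum_smul, ← Finset.sum_mul, sum_piw α hα0 m, one_mul])
    calc ∑ i ∈ Finset.range (m+1), ∑ j ∈ Finset.Icc (m+1) n,
        (piw α i m * piw α j n) • (yf T e x i - yf T e x j)
        = (∑ i ∈ Finset.range (m+1), ∑ j ∈ Finset.Icc (m+1) n,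
            (piw α i m * piw α j n) • yf T e x i)
          - ∑ i ∈ Finset.range (m+1), ∑ j ∈ Finset.Icc (m+1) n,
            (piw α i m * piw α j n) • yf T e x j := by
          simp [smul_sub, Finset.sum_sub_distrib]
      _ = (∑ j ∈ Finset.Icc (m+1) n, piw α j n) • x m
          - (x n - (∏ k ∈ Finset.Icc (m+1) n, (1 - α k)) • x m) := by
          rw [e1, e2, hxn]; abel
      _ = ((∏ k ∈ Finset.Icc (m+1) n, (1 - α k))
            + ∑ j ∈ Finset.Icc (m+1) n, piw α j n) • x m - x n := by
          rw [add_smul]; abel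
      _ = x m - x n := by rw [hPS, one_smul]
  -- per-term bound
  have hterm : ∀ i ∈ Finset.range (m+1), ∀ j ∈ Finset.Icc (m+1) n,
      ‖yf T e x i - yf T e x j‖ ≤ w ((i : ℤ) - 1) ((j : ℤ) - 1) + ε i + ε j := by
    intro i hi j hj
    rw [Finset.mem_Icc] at hj
    obtain ⟨j', rfl⟩ : ∃ j', j = j'+1 := ⟨j-1, by omega⟩
    have hYj : yf T e x (j'+1) = T (x j') + e (j'+1) := rfl
    match i with
    | 0 =>
      have hY0 : yf T e x 0 = x 0 := rfl
      have h0 : ((0:ℕ) : ℤ) - 1 = -1 := by norm_num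
      rw [h0, hwκ, hε0, hY0, hYj]
      have h1 : x 0 - (T (x j') + e (j'+1)) = -(T (x j') - x 0) + -(e (j'+1)) := by abel
      calc ‖x 0 - (T (x j') + e (j'+1))‖
          ≤ ‖T (x j') - x 0‖ + ‖e (j'+1)‖ := by
            rw [h1]
            exact (norm_add_le _ _).trans (by rw [norm_neg, norm_neg])
        _ ≤ κ + ε (j'+1) := add_le_add (hbound j') (hε _)
        _ = κ + 0 + ε (j'+1) := by ring
    | (i'+1) =>
      have hYi : yf T e x (i'+1) = T (x i') + e (i'+1) := rfl
      have hc1 : ((i'+1:ℕ) : ℤ) - 1 = (i' : ℤ) := by push_cast; ring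
      have hc2 : ((j'+1:ℕ) : ℤ) - 1 = (j' : ℤ) := by push_cast; ring
      rw [hc1, hc2, hYi, hYj]
      have hij : i' ≤ j' := by rw [Finset.mem_range] at hi; omega
      have h1 : T (x i') + e (i'+1) - (T (x j') + e (j'+1))
          = (T (x i') - T (x j')) + (e (i'+1) - e (j'+1)) := by abel
      calc ‖T (x i') + e (i'+1) - (T (x j') + e (j'+1))‖
          ≤ ‖T (x i') - T (x j')‖ + (‖e (i'+1)‖ + ‖e (j'+1)‖) := by
            rw [h1]
            exact (norm_add_le _ _).trans (add_le_add (le_refl _) (norm_sub_le _ _))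
        _ ≤ ‖x i' - x j'‖ + (ε (i'+1) + ε (j'+1)) :=
            add_le_add (hT _ (hxC i') _ (hxC j')) (add_le_add (hε _) (hε _))
        _ ≤ w i' j' + (ε (i'+1) + ε (j'+1)) := by
            have := IH j' (by omega) i' hij
            linarith
        _ = w i' j' + ε (i'+1) + ε (j'+1) := by ring
  rw [hwrec m n hmn, ← key]
  refine (norm_sum_le _ _).trans ?_
  refine le_trans (Finset.sum_le_sum fun i _ => norm_sum_le _ _) ?_
  refine Finset.sum_le_sum fun i hi => Finset.sum_le_sum fun j hj => ?_
  rw [norm_smul, Real.norm_of_nonneg (mul_nonneg (piw_nonneg α hα i m) (piw_nonneg α hα j n))]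
  exact mul_le_mul_of_nonneg_left (hterm i hi j hj)
    (mul_nonneg (piw_nonneg α hα i m) (piw_nonneg α hα j n))
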